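/- The function f(x) = e^{x²/2} N(x) is strictly increasing on ℝ, tends to 0 as x → −∞, and tends to +∞ as x → +∞; consequently, for every real c > 0 there exists a unique real x with e^{x²/2} N(x) = c. -/

import Mathlib

open MeasureTheory Real Set Filter

/-- Standard normal cdf `N(x)`. -/
noncomputable def stdCdf (x : ℝ) : ℝ := ∫ y in Set.Iic x, Real.exp (-y ^ 2 / 2) / Real.sqrt (2 * Real.pi)

noncomputable def phi (y : ℝ) : ℝ := Real.exp (-y ^ 2 / 2) / Real.sqrt (2 * Real.pi)

lemma phi_pos (y : ℝ) : 0 < phi y :=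
  div_pos (Real.exp_pos _) (Real.sqrt_pos.2 (by positivity))

lemma phi_cont : Continuous phi := by unfold phi; fun_prop

lemma phi_integrable : Integrable phi := by
  have h := (integrable_exp_neg_mul_sq (by norm_num : (0:ℝ) < 1/2)).div_const
    (Real.sqrt (2 * Real.pi))
  exact h.congr (Filter.Eventually.of_forall fun y => by unfold phi; ring_nf)

lemma mul_exp_integrable : Integrable (fun y : ℝ => y * Real.exp (-y ^ 2 / 2)) := by
  have h := integrable_mul_exp_neg_mul_sq (by norm_num : (0:ℝ) < 1/2)
  exact h.congr (Filter.Eventually.of_forall fun y => by ring_nf)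

lemma stdCdf_eq (x : ℝ) : stdCdf x = ∫ y in Set.Iic x, phi y := rfl

lemma stdCdf_pos (x : ℝ) : 0 < stdCdf x := by
  rw [stdCdf_eq, setIntegral_pos_iff_support_of_nonneg_ae
    (Filter.Eventually.of_forall fun y => (phi_pos y).le) phi_integrable.integrableOn]
  have hs : Function.support phi = univ := by
    ext y; simp [Function.mem_support, (phi_pos y).ne']
  rw [hs, univ_inter, Real.volume_Iic]
  simp

lemma stdCdf_hasDeriv (x : ℝ) : HasDerivAt stdCdf (phi x) x := by
  have key : ∀ u : ℝ, stdCdf u = stdCdf 0 + ∫ y in (0:ℝ)..u, phi y := by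
    intro u
    rw [← intervalIntegral.integral_Iic_sub_Iic phi_integrable.integrableOn
      phi_integrable.integrableOn, stdCdf_eq, stdCdf_eq]
    ring
  have h : HasDerivAt (fun u => stdCdf 0 + ∫ y in (0:ℝ)..u, phi y) (phi x) x := by
    refine (HasDerivAt.const_add _ ?_)
    exact intervalIntegral.integral_hasDerivAt_right
      phi_integrable.intervalIntegrable
      phi_cont.aestronglyMeasurable.stronglyMeasurableAtFilter
      phi_cont.continuousAt
  exact h.congr_of_eventuallyEq (Filter.Eventually.of_forall fun u => (key u))

lemma integral_mul_exp (x : ℝ) :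
    ∫ y in Set.Iic x, y * Real.exp (-y ^ 2 / 2) = -Real.exp (-x ^ 2 / 2) := by
  have hderiv : ∀ y : ℝ, HasDerivAt (fun y : ℝ => -Real.exp (-y ^ 2 / 2))
      (y * Real.exp (-y ^ 2 / 2)) y := by
    intro y
    have h1 : HasDerivAt (fun y : ℝ => -y ^ 2 / 2) (-y) y := by
      have := ((hasDerivAt_pow 2 y).neg.div_const 2)
      simpa [neg_div] using this
    have h2 := h1.exp
    have := h2.neg
    refine this.congr_deriv ?_
    ring
  have hf : Tendsto (fun y : ℝ => -Real.exp (-y ^ 2 / 2)) atBot (nhds 0) := by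
    have hsq : Tendsto (fun y : ℝ => y ^ 2) atBot atTop := by
      have h2 : Tendsto (fun z : ℝ => z ^ 2) atTop atTop :=
        tendsto_pow_atTop (by norm_num)
      have := h2.comp tendsto_neg_atBot_atTop
      simpa [Function.comp_def, neg_sq] using this
    have harg : Tendsto (fun y : ℝ => -y ^ 2 / 2) atBot atBot := by
      have hneg : Tendsto (fun y : ℝ => -y ^ 2) atBot atBot := by
        have := tendsto_neg_atTop_atBot.comp hsq
        simpa [Function.comp_def] using this
      exact hneg.atBot_div_const (by norm_num : (0:ℝ) < 2)
    have := (Real.tendsto_exp_atBot.comp harg).neg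
    simpa using this
  have := MeasureTheory.integral_Iic_of_hasDerivAt_of_tendsto
    (((hderiv x).continuousAt).continuousWithinAt)
    (fun y _ => hderiv y) mul_exp_integrable.integrableOn hf
  simpa using this

lemma integrable_id_mul_phi : Integrable (fun y : ℝ => y * phi y) :=
  (mul_exp_integrable.div_const (Real.sqrt (2 * Real.pi))).congr
    (Filter.Eventually.of_forall fun y => by unfold phi; ring)

lemma integral_id_mul_phi (x : ℝ) : ∫ y in Set.Iic x, y * phi y = -phi x := by
  have h : ∀ y : ℝ, y * phi y = (y * Real.exp (-y ^ 2 / 2)) / Real.sqrt (2 * Real.pi) := by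
    intro y; unfold phi; ring
  simp_rw [h]
  rw [integral_div, integral_mul_exp]
  unfold phi; ring

lemma key (x : ℝ) : ∫ y in Set.Iic x, (x - y) * phi y = x * stdCdf x + phi x := by
  have h : ∀ y : ℝ, (x - y) * phi y = x * phi y - y * phi y := fun y => by ring
  simp_rw [h]
  rw [integral_sub ((phi_integrable.const_mul x).integrableOn)
    integrable_id_mul_phi.integrableOn, MeasureTheory.integral_const_mul, ← stdCdf_eq,
    integral_id_mul_phi]
  ring

lemma key_pos (x : ℝ) : 0 < x * stdCdf x + phi x := by
  rw [← key]
  have hint : Integrable (fun y : ℝ => (x - y) * phi y) :=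
    ((phi_integrable.const_mul x).sub integrable_id_mul_phi).congr
      (Filter.Eventually.of_forall fun y => by simp only [Pi.sub_apply]; ring)
  rw [setIntegral_pos_iff_support_of_nonneg_ae ?_ hint.integrableOn]
  · refine lt_of_lt_of_le ?_ (measure_mono (?_ : Set.Iio x ⊆ _))
    · rw [Real.volume_Iio]; simp
    · intro y hy
      exact ⟨ne_of_gt (mul_pos (sub_pos.2 hy) (phi_pos y)), Set.mem_Iic.mpr hy.le⟩
  · rw [EventuallyLE, ae_restrict_iff' measurableSet_Iic]
    filter_upwards with y hy
    exact mul_nonneg (sub_nonneg.2 hy) (phi_pos y).le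

lemma f_hasDeriv (x : ℝ) : HasDerivAt (fun x : ℝ => Real.exp (x ^ 2 / 2) * stdCdf x)
    (Real.exp (x ^ 2 / 2) * (x * stdCdf x + phi x)) x := by
  have h1 : HasDerivAt (fun x : ℝ => Real.exp (x ^ 2 / 2)) (Real.exp (x ^ 2 / 2) * x) x := by
    have := ((hasDerivAt_pow 2 x).div_const 2).exp
    convert this using 1
    simp
  have := h1.mul (stdCdf_hasDeriv x)
  refine this.congr_deriv ?_
  ring

lemma f_mono : StrictMono (fun x : ℝ => Real.exp (x ^ 2 / 2) * stdCdf x) := by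
  apply strictMono_of_deriv_pos
  intro x
  rw [(f_hasDeriv x).deriv]
  exact mul_pos (Real.exp_pos _) (key_pos x)

lemma sqrt_2pi_pos : 0 < Real.sqrt (2 * Real.pi) := Real.sqrt_pos.2 (by positivity)

lemma f_bot : Tendsto (fun x : ℝ => Real.exp (x ^ 2 / 2) * stdCdf x) atBot (nhds 0) := by
  have hupper : Tendsto (fun x : ℝ => (Real.sqrt (2 * Real.pi) * (-x))⁻¹) atBot (nhds 0) := by
    apply Tendsto.inv_tendsto_atTop
    exact tendsto_neg_atBot_atTop.const_mul_atTop sqrt_2pi_pos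
  apply tendsto_of_tendsto_of_tendsto_of_le_of_le' tendsto_const_nhds hupper
  · exact Filter.Eventually.of_forall fun x =>
      (mul_pos (Real.exp_pos _) (stdCdf_pos x)).le
  · filter_upwards [eventually_lt_atBot (0:ℝ)] with x hx
    have h2 : (-x) * stdCdf x ≤ phi x := by nlinarith [key_pos x]
    have hphi : Real.exp (x ^ 2 / 2) * phi x = (Real.sqrt (2 * Real.pi))⁻¹ := by
      have h0 : x ^ 2 / 2 + -x ^ 2 / 2 = 0 := by ring
      unfold phi
      rw [← mul_div_assoc, ← Real.exp_add, h0, Real.exp_zero, one_div]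
    have hb : 0 < Real.sqrt (2 * Real.pi) * (-x) := mul_pos sqrt_2pi_pos (by linarith)
    rw [inv_eq_one_div, le_div_iff₀ hb]
    calc Real.exp (x ^ 2 / 2) * stdCdf x * (Real.sqrt (2 * Real.pi) * (-x))
        = (Real.sqrt (2 * Real.pi) * Real.exp (x ^ 2 / 2)) * ((-x) * stdCdf x) := by ring
      _ ≤ (Real.sqrt (2 * Real.pi) * Real.exp (x ^ 2 / 2)) * phi x :=
          mul_le_mul_of_nonneg_left h2 (mul_nonneg sqrt_2pi_pos.le (Real.exp_pos _).le)
      _ = Real.sqrt (2 * Real.pi) * (Real.exp (x ^ 2 / 2) * phi x) := by ring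
      _ = Real.sqrt (2 * Real.pi) * (Real.sqrt (2 * Real.pi))⁻¹ := by rw [hphi]
      _ = 1 := mul_inv_cancel₀ sqrt_2pi_pos.ne'

lemma f_top : Tendsto (fun x : ℝ => Real.exp (x ^ 2 / 2) * stdCdf x) atTop atTop := by
  have hexp : Tendsto (fun x : ℝ => Real.exp (x ^ 2 / 2)) atTop atTop := by
    apply Real.tendsto_exp_atTop.comp
    have h2 : Tendsto (fun x : ℝ => x ^ 2) atTop atTop := tendsto_pow_atTop (by norm_num)
    exact h2.atTop_div_const (by norm_num)
  have hc := hexp.const_mul_atTop (stdCdf_pos 0)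
  apply tendsto_atTop_mono' atTop ?_ hc
  filter_upwards [eventually_ge_atTop (0:ℝ)] with x hx
  have hmono : stdCdf 0 ≤ stdCdf x := by
    rw [stdCdf_eq, stdCdf_eq]
    exact setIntegral_mono_set phi_integrable.integrableOn
      (Filter.Eventually.of_forall fun y => (phi_pos y).le)
      (HasSubset.Subset.eventuallyLE (Iic_subset_Iic.mpr hx))
  nlinarith [Real.exp_pos (x ^ 2 / 2)]

theorem exp_sq_mul_cdf_bijective :
    StrictMono (fun x : ℝ => Real.exp (x ^ 2 / 2) * stdCdf x) ∧
    Tendsto (fun x : ℝ => Real.exp (x ^ 2 / 2) * stdCdf x) atBot (nhds 0) ∧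
    Tendsto (fun x : ℝ => Real.exp (x ^ 2 / 2) * stdCdf x) atTop atTop ∧
    ∀ c : ℝ, 0 < c → ∃! x : ℝ, Real.exp (x ^ 2 / 2) * stdCdf x = c := by
  refine ⟨f_mono, f_bot, f_top, fun c hc => ?_⟩
  have hcont : Continuous (fun x : ℝ => Real.exp (x ^ 2 / 2) * stdCdf x) :=
    continuous_iff_continuousAt.2 fun x => (f_hasDeriv x).continuousAt
  obtain ⟨a, ha⟩ := (f_bot.eventually_lt_const hc).exists
  obtain ⟨b, hb⟩ := (f_top.eventually_gt_atTop c).exists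
  have hab : a < b := f_mono.lt_iff_lt.mp (lt_trans ha hb)
  obtain ⟨x, -, hx⟩ := intermediate_value_Icc hab.le hcont.continuousOn ⟨ha.le, hb.le⟩
  exact ⟨x, hx, fun y hy => f_mono.injective (hy.trans hx.symm)⟩
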